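/- Let d be a prime, n ≥ 1, D := d^n, let G be a finite additive group, and let T : G → (D×D unitary complex matrices) satisfy T(0) = 1 and: for all a, b ∈ G there exists c ∈ ℂ with |c| = 1 and T(a) · (T(b))† = c · T(a − b). Fix any error element m ∈ (ZMod d)^n × (ZMod d)^n and let Ω(m) := (W(m) ⊗ 1) Ω₀. Then the family of unit vectors { ((T(a))† ⊗ 1) Ω(m) : a ∈ G } is pairwise orthogonal if and only if Tr(T(a)) = 0 for all a ≠ 0 in G. -/

import Mathlib

open Matrix Complex Kronecker

noncomputable section

/-- ω = exp(2πi/d). -/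
def omga (d : ℕ) : ℂ := Complex.exp (2 * Real.pi * Complex.I / d)

/-- The Weyl operator W_{k,l}: (j,j') entry is ω^{jk} if j' = j + l, else 0. -/
def weyl (d : ℕ) (k l : ZMod d) : Matrix (ZMod d) (ZMod d) ℂ :=
  Matrix.of fun j j' => if j' = j + l then omga d ^ (j * k).val else 0

/-- n-fold Kronecker product W(k⃗,l⃗), indexed by Fin n → ZMod d. -/
def weylN (d n : ℕ) (e : (Fin n → ZMod d) × (Fin n → ZMod d)) :
    Matrix (Fin n → ZMod d) (Fin n → ZMod d) ℂ :=
  Matrix.of fun j j' => ∏ i, weyl d (e.1 i) (e.2 i) (j i) (j' i)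

/-- The maximally entangled unit vector Ω₀ = D^{−1/2} Σ_i e_i ⊗ e_i, D = d^n. -/
def maxEnt (d n : ℕ) : ((Fin n → ZMod d) × (Fin n → ZMod d)) → ℂ :=
  fun q => if q.1 = q.2 then (((Real.sqrt (d ^ n))⁻¹ : ℝ) : ℂ) else 0

lemma omga_abs (d : ℕ) : ‖omga d‖ = 1 := by
  have : (2 * Real.pi * Complex.I / d) = ((2 * Real.pi / d : ℝ) : ℂ) * Complex.I := by
    push_cast; ring
  rw [omga, this, Complex.norm_exp_ofReal_mul_I]

lemma star_omga_pow (d v : ℕ) : star (omga d ^ v) * omga d ^ v = 1 := by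
  have h : ‖omga d ^ v‖ = 1 := by rw [norm_pow, omga_abs, one_pow]
  rw [Complex.star_def, mul_comm, Complex.mul_conj, Complex.normSq_eq_norm_sq, h]
  norm_num

lemma weyl_unitary (d : ℕ) [NeZero d] (k l : ZMod d) : (weyl d k l)ᴴ * weyl d k l = 1 := by
  ext j j'
  rw [Matrix.mul_apply]
  rw [Finset.sum_eq_single (j - l)]
  · simp only [conjTranspose_apply, weyl, of_apply, sub_add_cancel, if_pos rfl]
    by_cases h : j' = j
    · subst h; rw [if_pos rfl, if_pos trivial, star_omga_pow, Matrix.one_apply_eq]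
    · rw [if_neg h, mul_zero, Matrix.one_apply_ne (fun hh => h hh.symm)]
  · intro r _ hr
    have : j ≠ r + l := fun hh => hr (by rw [hh]; ring)
    simp [conjTranspose_apply, weyl, this]
  · simp

lemma weylN_unitary (d n : ℕ) [NeZero d] (e : (Fin n → ZMod d) × (Fin n → ZMod d)) :
    (weylN d n e)ᴴ * weylN d n e = 1 := by
  ext j j'
  rw [Matrix.mul_apply]
  have : ∀ r : Fin n → ZMod d,
      (weylN d n e)ᴴ j r * weylN d n e r j' =
      ∏ i, (star (weyl d (e.1 i) (e.2 i) (r i) (j i)) * weyl d (e.1 i) (e.2 i) (r i) (j' i)) := by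
    intro r
    rw [conjTranspose_apply, weylN, of_apply, of_apply, star_prod, ← Finset.prod_mul_distrib]
  simp_rw [this]
  rw [← Fintype.piFinset_univ, ← Finset.prod_univ_sum (t := fun _ => Finset.univ)
    (f := fun i x => star (weyl d (e.1 i) (e.2 i) x (j i)) * weyl d (e.1 i) (e.2 i) x (j' i))]
  have hfac : ∀ i : Fin n,
      (∑ x : ZMod d, star (weyl d (e.1 i) (e.2 i) x (j i)) * weyl d (e.1 i) (e.2 i) x (j' i)) =
      (1 : Matrix (ZMod d) (ZMod d) ℂ) (j i) (j' i) := by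
    intro i
    rw [← weyl_unitary d (e.1 i) (e.2 i), Matrix.mul_apply]
    simp [conjTranspose_apply]
  simp_rw [hfac]
  by_cases h : j = j'
  · subst h; simp
  · obtain ⟨i, hi⟩ := Function.ne_iff.mp h
    rw [Matrix.one_apply_ne h, Finset.prod_eq_zero (Finset.mem_univ i)]
    rw [Matrix.one_apply_ne hi]

variable {d n : ℕ} [NeZero d]

lemma step1 (M : Matrix (Fin n → ZMod d) (Fin n → ZMod d) ℂ) :
    (M ⊗ₖ (1 : Matrix (Fin n → ZMod d) (Fin n → ZMod d) ℂ)).mulVec (maxEnt d n) =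
    fun pq => (((Real.sqrt (d ^ n))⁻¹ : ℝ) : ℂ) * M pq.1 pq.2 := by
  funext pq
  obtain ⟨p, q⟩ := pq
  simp [mulVec, dotProduct, Fintype.sum_prod_type, maxEnt, Matrix.one_apply,
    mul_ite, ite_mul, mul_zero, zero_mul, Finset.sum_ite_eq, Finset.sum_ite_eq',
    mul_comm]

lemma step2 (N M : Matrix (Fin n → ZMod d) (Fin n → ZMod d) ℂ) (c : ℂ) :
    (N ⊗ₖ (1 : Matrix (Fin n → ZMod d) (Fin n → ZMod d) ℂ)).mulVec
      (fun pq => c * M pq.1 pq.2) =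
    fun pq => c * (N * M) pq.1 pq.2 := by
  funext pq
  obtain ⟨p, q⟩ := pq
  simp [mulVec, dotProduct, Fintype.sum_prod_type, Matrix.one_apply, Matrix.mul_apply,
    mul_ite, ite_mul, mul_zero, zero_mul, Finset.sum_ite_eq, Finset.sum_ite_eq',
    Finset.mul_sum]
  congr 1; funext r; ring

lemma inner_eq (W A B : Matrix (Fin n → ZMod d) (Fin n → ZMod d) ℂ) :
    star ((Aᴴ ⊗ₖ (1 : Matrix (Fin n → ZMod d) (Fin n → ZMod d) ℂ)).mulVec
        ((W ⊗ₖ (1 : Matrix (Fin n → ZMod d) (Fin n → ZMod d) ℂ)).mulVec (maxEnt d n))) ⬝ᵥ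
      ((Bᴴ ⊗ₖ (1 : Matrix (Fin n → ZMod d) (Fin n → ZMod d) ℂ)).mulVec
        ((W ⊗ₖ (1 : Matrix (Fin n → ZMod d) (Fin n → ZMod d) ℂ)).mulVec (maxEnt d n))) =
    (((d : ℂ) ^ n)⁻¹) * (Wᴴ * (A * Bᴴ) * W).trace := by
  rw [step1, step2, step2]
  set c : ℂ := (((Real.sqrt (d ^ n))⁻¹ : ℝ) : ℂ) with hc
  have hcc : star c * c = ((d : ℂ) ^ n)⁻¹ := by
    rw [hc, Complex.star_def, Complex.conj_ofReal, ← Complex.ofReal_mul,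
      ← mul_inv, Real.mul_self_sqrt (by positivity)]
    push_cast; ring
  have key : (Wᴴ * (A * Bᴴ) * W) = ((Aᴴ * W)ᴴ) * (Bᴴ * W) := by
    rw [conjTranspose_mul, conjTranspose_conjTranspose]
    noncomm_ring
  rw [key]
  rw [dotProduct]
  rw [show (Finset.univ : Finset ((Fin n → ZMod d) × (Fin n → ZMod d))) = Finset.univ from rfl]
  rw [Fintype.sum_prod_type]
  have htr : ((Aᴴ * W)ᴴ * (Bᴴ * W)).trace =
      ∑ p : Fin n → ZMod d, ∑ q : Fin n → ZMod d,
        star ((Aᴴ * W) q p) * ((Bᴴ * W) q p) := by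
    simp [Matrix.trace, Matrix.mul_apply, Matrix.diag, conjTranspose_apply, mul_comm]
  rw [htr, Finset.mul_sum, Finset.sum_comm]
  refine Finset.sum_congr rfl fun p _ => ?_
  rw [Finset.mul_sum]
  refine Finset.sum_congr rfl fun q _ => ?_
  simp only [Pi.star_apply, star_mul']
  rw [← hcc]; ring

/-- for a family of unitaries T : G → U(D) with T(0) = 1 and
T(a)T(b)† = c·T(a−b) for unimodular phases c, the vectors (T(a)† ⊗ 1)Ω(m) are pairwise
orthogonal iff Tr(T(a)) = 0 for all a ≠ 0. -/
theorem twisted_bell_orthogonal_iff_traceless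
    (d n : ℕ) [NeZero d] (hd : d.Prime) (hn : 1 ≤ n)
    (G : Type*) [AddGroup G] [Fintype G]
    (T : G → Matrix (Fin n → ZMod d) (Fin n → ZMod d) ℂ)
    (hT0 : T 0 = 1)
    (hTU : ∀ a, T a ∈ Matrix.unitaryGroup (Fin n → ZMod d) ℂ)
    (hTgrp : ∀ a b : G, ∃ c : ℂ, ‖c‖ = 1 ∧ T a * (T b)ᴴ = c • T (a - b))
    (m : (Fin n → ZMod d) × (Fin n → ZMod d)) :
    (∀ a b : G, a ≠ b →
      star (((T a)ᴴ ⊗ₖ (1 : Matrix (Fin n → ZMod d) (Fin n → ZMod d) ℂ)).mulVec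
          ((weylN d n m ⊗ₖ (1 : Matrix (Fin n → ZMod d) (Fin n → ZMod d) ℂ)).mulVec
            (maxEnt d n))) ⬝ᵥ
        (((T b)ᴴ ⊗ₖ (1 : Matrix (Fin n → ZMod d) (Fin n → ZMod d) ℂ)).mulVec
          ((weylN d n m ⊗ₖ (1 : Matrix (Fin n → ZMod d) (Fin n → ZMod d) ℂ)).mulVec
            (maxEnt d n))) = 0) ↔
    (∀ a : G, a ≠ 0 → (T a).trace = 0) := by

  have hWu : (weylN d n m)ᴴ * weylN d n m = 1 := weylN_unitary d n m
  have hWu' : weylN d n m * (weylN d n m)ᴴ = 1 := mul_eq_one_comm.mp hWu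
  have hD : (((d : ℂ) ^ n)⁻¹) ≠ 0 :=
    inv_ne_zero (pow_ne_zero _ (Nat.cast_ne_zero.mpr (NeZero.ne d)))
  have hinner : ∀ a b : G, ∃ c : ℂ, ‖c‖ = 1 ∧
      star (((T a)ᴴ ⊗ₖ (1 : Matrix (Fin n → ZMod d) (Fin n → ZMod d) ℂ)).mulVec
          ((weylN d n m ⊗ₖ (1 : Matrix (Fin n → ZMod d) (Fin n → ZMod d) ℂ)).mulVec
            (maxEnt d n))) ⬝ᵥ
        (((T b)ᴴ ⊗ₖ (1 : Matrix (Fin n → ZMod d) (Fin n → ZMod d) ℂ)).mulVec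
          ((weylN d n m ⊗ₖ (1 : Matrix (Fin n → ZMod d) (Fin n → ZMod d) ℂ)).mulVec
            (maxEnt d n))) = (((d : ℂ) ^ n)⁻¹) * c * (T (a - b)).trace := by
    intro a b
    obtain ⟨c, hc1, hc2⟩ := hTgrp a b
    refine ⟨c, hc1, ?_⟩
    rw [inner_eq, hc2, Matrix.mul_smul, Matrix.smul_mul, Matrix.trace_smul,
      Matrix.trace_mul_cycle, hWu', one_mul, smul_eq_mul]
    ring
  constructor
  · intro H a ha
    obtain ⟨c, hc1, hc2⟩ := hinner a 0
    have h0 := H a 0 ha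
    rw [hc2] at h0
    have hcne : c ≠ 0 := by intro h; rw [h] at hc1; simp at hc1
    rcases mul_eq_zero.mp h0 with h | h
    · rcases mul_eq_zero.mp h with h' | h'
      · exact absurd h' hD
      · exact absurd h' hcne
    · simpa using h
  · intro H a b hab
    obtain ⟨c, hc1, hc2⟩ := hinner a b
    rw [hc2, H (a - b) (sub_ne_zero.mpr hab), mul_zero]

end
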